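/- Let r, a be coprime integers with 0 ≤ a < r and r ≥ 1. If G ∈ GL₂(ℤ) has determinant -1, and a cone σ in ℚ² has primitive ray generators forming a matrix with Hermite normal form [[1, a],[0, r]], then the cone Gσ has Hermite normal form [[1, a*],[0, r]] where a·a* ≡ 1 (mod r). -/
import Mathlib


abbrev Z2 := ℤ × ℤ
abbrev Q2 := ℚ × ℚ

/-- The canonical embedding of lattice points into `ℚ × ℚ`. -/
def toQ (v : Z2) : Q2 := ((v.1 : ℚ), (v.2 : ℚ))

/-- Pairing of a dual lattice vector with a rational point. -/
def dotQ (u : Z2) (x : Q2) : ℚ := (u.1 : ℚ) * x.1 + (u.2 : ℚ) * x.2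

/-- A lattice vector is primitive if its coordinates are coprime. -/
def IsPrimitive (v : Z2) : Prop := Int.gcd v.1 v.2 = 1

/-- Action of an integer matrix on `ℚ × ℚ`. -/
def applyM (G : Matrix (Fin 2) (Fin 2) ℤ) (x : Q2) : Q2 :=
  ((G 0 0 : ℚ) * x.1 + (G 0 1 : ℚ) * x.2, (G 1 0 : ℚ) * x.1 + (G 1 1 : ℚ) * x.2)

/-- Action of an integer matrix on `ℤ × ℤ`. -/
def applyZ (G : Matrix (Fin 2) (Fin 2) ℤ) (v : Z2) : Z2 :=
  (G 0 0 * v.1 + G 0 1 * v.2, G 1 0 * v.1 + G 1 1 * v.2)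

/-- The convex hull in `ℚ²` of a finite set of lattice points. -/
def hull (V : Finset Z2) : Set Q2 := convexHull ℚ (toQ '' (V : Set Z2))

/-- `V` is the vertex set of a Fano polygon: the origin is in the strict interior of the
convex hull, every vertex is primitive, and the points of `V` are exactly the vertices
(extreme points) of the hull. -/
def IsFanoPolygon (V : Finset Z2) : Prop :=
  (0 : Q2) ∈ interior (hull V) ∧
  (∀ v ∈ V, IsPrimitive v) ∧
  toQ '' (V : Set Z2) = Set.extremePoints ℚ (hull V)

/-- `E` is the edge of `P` with primitive inner normal `u` and height `h`:
`u ≥ -h` holds on `P`, with equality exactly on `E`, and `E` has more than one point. -/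
def IsEdge (P E : Set Q2) (u : Z2) (h : ℤ) : Prop :=
  IsPrimitive u ∧ 0 < h ∧
  (∀ x ∈ P, -(h : ℚ) ≤ dotQ u x) ∧
  E = {x ∈ P | dotQ u x = -(h : ℚ)} ∧
  ∃ a b, a ∈ E ∧ b ∈ E ∧ a ≠ b

/-- The lattice length of an edge: the number of lattice points on it minus one. -/
noncomputable def latticeLength (E : Set Q2) : ℕ :=
  Set.ncard {v : Z2 | toQ v ∈ E} - 1

/-- An edge is long if its lattice length is at least its height. -/
def IsLongEdge (P E : Set Q2) (u : Z2) (h : ℤ) : Prop :=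
  IsEdge P E u h ∧ h ≤ (latticeLength E : ℤ)

/-- `P` has a non-empty basket of R-singularities: some edge has lattice length
not a multiple of its height. -/
def HasRsing (P : Set Q2) : Prop :=
  ∃ E u h, IsEdge P E u h ∧ ¬ (h ∣ (latticeLength E : ℤ))

/-- Central symmetry: `P = -P`. -/
def CentSym (P : Set Q2) : Prop := ∀ x, x ∈ P ↔ -x ∈ P

/-- `G` is a lattice automorphism of `P`. -/
def IsAut (G : Matrix (Fin 2) (Fin 2) ℤ) (P : Set Q2) : Prop :=
  IsUnit G.det ∧ applyM G '' P = P

/-- `P` admits a lattice automorphism of order 3. -/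
def ThreeSym (P : Set Q2) : Prop := ∃ G, IsAut G P ∧ G ^ 3 = 1 ∧ G ≠ 1

/-- `P` is symmetric: the fixed-point set of its automorphism group is `{0}`. -/
def SymmetricPolygon (P : Set Q2) : Prop :=
  {x : Q2 | ∀ G, IsAut G P → applyM G x = x} = {0}

/-- The matrix whose columns are `v₀` and `v₁`. -/
def colMat (v₀ v₁ : Z2) : Matrix (Fin 2) (Fin 2) ℤ := !![v₀.1, v₁.1; v₀.2, v₁.2]

/-- The cone with primitive ray generators `v₀, v₁` (anticlockwise) has (row-style)
Hermite normal form `[[1, a], [0, r]]`. -/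
def HNFis (v₀ v₁ : Z2) (a r : ℤ) : Prop :=
  ∃ U : Matrix (Fin 2) (Fin 2) ℤ, U.det = 1 ∧ colMat v₀ v₁ = U * !![1, a; 0, r]

/-- If a cone `σ` with primitive anticlockwise ray generators `v₀, v₁` has Hermite normal
form `[[1, a], [0, r]]` and `G` has determinant `-1`, then `Gσ` (whose anticlockwise
generators are `Gv₁, Gv₀`) has Hermite normal form `[[1, a*], [0, r]]` with
`a·a* ≡ 1 (mod r)`. -/
theorem stmt_0 (r a : ℤ) (hr : 1 ≤ r) (ha0 : 0 ≤ a) (har : a < r)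
    (hcop : Int.gcd a r = 1)
    (v₀ v₁ : Z2) (hp0 : IsPrimitive v₀) (hp1 : IsPrimitive v₁)
    (hanticlockwise : 0 < v₀.1 * v₁.2 - v₀.2 * v₁.1)
    (hH : HNFis v₀ v₁ a r)
    (G : Matrix (Fin 2) (Fin 2) ℤ) (hG : G.det = -1) :
    ∃ a' : ℤ, 0 ≤ a' ∧ a' < r ∧ r ∣ a * a' - 1 ∧
      HNFis (applyZ G v₁) (applyZ G v₀) a' r := by
  obtain ⟨U, hU, hEq⟩ := hH
  have hrpos : (0:ℤ) < r := hr
  have hbz : a * Int.gcdA a r + r * Int.gcdB a r = 1 := by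
    have h := Int.gcd_eq_gcd_ab a r
    rw [hcop] at h
    push_cast at h
    linarith
  set x := Int.gcdA a r with hx
  set a' := x % r with ha'
  have hxmod : a' = x - r * (x / r) := by rw [ha', Int.emod_def]
  have hdvd : r ∣ a * a' - 1 := by
    refine ⟨-Int.gcdB a r - a * (x / r), ?_⟩
    rw [hxmod]; ring_nf; linarith [hbz]
  obtain ⟨k, hk⟩ := hdvd
  refine ⟨a', Int.emod_nonneg x (by omega), Int.emod_lt_of_pos x hrpos, ⟨k, hk⟩, ?_⟩
  -- extract entries of hEq
  have e00 : v₀.1 = U 0 0 := by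
    have := congrFun (congrFun hEq 0) 0
    simpa [colMat, Matrix.mul_apply, Fin.sum_univ_two] using this
  have e10 : v₀.2 = U 1 0 := by
    have := congrFun (congrFun hEq 1) 0
    simpa [colMat, Matrix.mul_apply, Fin.sum_univ_two] using this
  have e01 : v₁.1 = U 0 0 * a + U 0 1 * r := by
    have := congrFun (congrFun hEq 0) 1
    simpa [colMat, Matrix.mul_apply, Fin.sum_univ_two] using this
  have e11 : v₁.2 = U 1 0 * a + U 1 1 * r := by
    have := congrFun (congrFun hEq 1) 1
    simpa [colMat, Matrix.mul_apply, Fin.sum_univ_two] using this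
  refine ⟨G * U * !![a, -k; r, -a'], ?_, ?_⟩
  · have hM : (!![a, -k; r, -a'] : Matrix (Fin 2) (Fin 2) ℤ).det = -1 := by
      rw [Matrix.det_fin_two_of]; linarith [hk]
    rw [Matrix.det_mul, Matrix.det_mul, hG, hU, hM]; ring
  · ext i j
    fin_cases i <;> fin_cases j <;>
      simp [colMat, applyZ, Matrix.mul_apply, Fin.sum_univ_two, e00, e10, e01, e11] <;>
      [skip; linear_combination (-(G 0 0 * U 0 0) - G 0 1 * U 1 0) * hk;
       skip; linear_combination (-(G 1 0 * U 0 0) - G 1 1 * U 1 0) * hk] <;>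
      ring
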